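/- Let φ(x) = max{0, x−1} and let Â₃ := { (uⁱ, v^{i+1}) : (u,v) ∈ A, w((u,v)) > 0, i ∈ {1,…,k−1} } with capacity c((uⁱ,v^{i+1})) := w((u,v)). Then: for every X ⊆ V̂ with s ∈ X and t ∉ X and δ(X) < M there exists a k-potential p of G with H(p) = δ(X); and conversely, for every k-potential p of G there exists X ⊆ V̂ with s ∈ X, t ∉ X, and δ(X) = H(p). -/

import Mathlib

/-- The vertex set `V̂` of the extended digraph: `k` copies `vⁱ` of each vertex `v ∈ V`
(encoded `Sum.inl (v, i)`), plus the source `s := Sum.inr true` and the sink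
`t := Sum.inr false`. -/
abbrev VhatT (V : Type*) (k : ℕ) : Type _ := (V × Fin k) ⊕ Bool

/-- A `k`-potential of the DAG `G = (V, A)` with source `⊤ = top` and sink `⊥ = bot`:
`p(⊥) = k`, `p(⊤) = 0`, `0 ≤ p(v) ≤ k`, and `p(u) ≤ p(v)` for every arc `(u, v)`. -/
def IsKPotentialG {V : Type*} (A : Finset (V × V)) (bot top : V) (k : ℕ) (p : V → ℤ) : Prop :=
  p bot = k ∧ p top = 0 ∧ (∀ v, 0 ≤ p v ∧ p v ≤ k) ∧ ∀ a ∈ A, p a.1 ≤ p a.2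

/-- The total capacity of an arc of `Ĝ` for the reduction of {\sc Cov-k-Diverse}
(`φ(x) = max{0, x−1}`): the arcs `Â₁ = {(vⁱ, v^{i+1})}` and
`Â₂ = {(vⁱ, uⁱ) : (u,v) ∈ A} ∪ {(⊥ⁱ, t)} ∪ {(s, ⊤ⁱ)}` have capacity `M`, and the arcs
`Â₃ = {(uⁱ, v^{i+1}) : (u,v) ∈ A, w((u,v)) > 0, i ∈ {1,…,k−1}}` have capacity `w((u,v))`. -/
def cap11 {V : Type*} [DecidableEq V] (A : Finset (V × V)) (w : V × V → ℕ)
    (bot top : V) (k : ℕ) (M : ℤ) : VhatT V k → VhatT V k → ℤ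
  | Sum.inl (a, i), Sum.inl (b, j) =>
      (if a = b ∧ (j : ℕ) = (i : ℕ) + 1 then M else 0) +
      (if (b, a) ∈ A ∧ i = j then M else 0) +
      (if (a, b) ∈ A ∧ 0 < w (a, b) ∧ (j : ℕ) = (i : ℕ) + 1 then (w (a, b) : ℤ) else 0)
  | Sum.inr true, Sum.inl (v, _) => if v = top then M else 0
  | Sum.inl (v, _), Sum.inr false => if v = bot then M else 0
  | _, _ => 0

/-- `δ(X)`: the sum of the capacities of all arcs of `Ĝ` from `X` to `V̂ \ X`. -/
def cutVal {V : Type*} [Fintype V] [DecidableEq V] (k : ℕ)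
    (c : VhatT V k → VhatT V k → ℤ) (X : Finset (VhatT V k)) : ℤ :=
  ∑ x : VhatT V k, ∑ y : VhatT V k, if x ∈ X ∧ y ∉ X then c x y else 0

open Finset

lemma inner_count (k : ℕ) (m : ℕ) (a b : ℤ) (ha : 0 ≤ a) (hb : b ≤ k) :
    (∑ i : Fin k, ∑ j : Fin k,
      (if ((j:ℕ) = (i:ℕ) + 1 ∧ a ≤ ((i:ℕ):ℤ)) ∧ (((j:ℕ):ℤ) < b) then (m:ℤ) else 0))
      = m * max 0 (b - a - 1) := by
  have h1 : (∑ i : Fin k, ∑ j : Fin k,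
      (if ((j:ℕ) = (i:ℕ) + 1 ∧ a ≤ ((i:ℕ):ℤ)) ∧ (((j:ℕ):ℤ) < b) then (m:ℤ) else 0))
      = ∑ i ∈ range k, ∑ j ∈ range k,
        (if (j = i + 1 ∧ a ≤ (i:ℤ)) ∧ ((j:ℤ) < b) then (m:ℤ) else 0) := by
    rw [← Fin.sum_univ_eq_sum_range (fun i => ∑ j ∈ range k,
        (if (j = i + 1 ∧ a ≤ (i:ℤ)) ∧ ((j:ℤ) < b) then (m:ℤ) else 0))]
    refine Finset.sum_congr rfl fun i _ => ?_
    rw [← Fin.sum_univ_eq_sum_range (fun j => (if (j = (i:ℕ) + 1 ∧ a ≤ ((i:ℕ):ℤ)) ∧ ((j:ℤ) < b) then (m:ℤ) else 0))]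
  rw [h1]
  have h2 : ∀ i ∈ range k, (∑ j ∈ range k,
      (if (j = i + 1 ∧ a ≤ (i:ℤ)) ∧ ((j:ℤ) < b) then (m:ℤ) else 0))
      = (if a ≤ (i:ℤ) ∧ ((i:ℤ)+1) < b then (m:ℤ) else 0) := by
    intro i hi
    have : ∀ j ∈ range k, (if (j = i + 1 ∧ a ≤ (i:ℤ)) ∧ ((j:ℤ) < b) then (m:ℤ) else 0)
        = if j = i + 1 then (if a ≤ (i:ℤ) ∧ ((j:ℤ) < b) then (m:ℤ) else 0) else 0 := by
      intro j _; by_cases h : j = i + 1 <;> simp [h, and_assoc]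
    rw [Finset.sum_congr rfl this, Finset.sum_ite_eq' (range k) (i+1)]
    by_cases hik : i + 1 ∈ range k
    · simp only [hik, if_true]
      push_cast
      rfl
    · simp only [hik, if_false]
      rw [mem_range] at hik hi
      have : ¬ (a ≤ (i:ℤ) ∧ ((i:ℤ)+1) < b) := by
        rintro ⟨_, h2⟩; omega
      simp [this]
  rw [Finset.sum_congr rfl h2, ← Finset.sum_filter]
  have h3 : (range k).filter (fun n : ℕ => a ≤ (n:ℤ) ∧ ((n:ℤ)+1) < b) = Ico a.toNat (b-1).toNat := by
    ext n
    simp only [mem_filter, mem_range, mem_Ico]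
    omega
  rw [h3, Finset.sum_const, Nat.card_Ico, nsmul_eq_mul]
  have hc : (((b-1).toNat - a.toNat : ℕ):ℤ) = max 0 (b - a - 1) := by
    rcases le_total (b - a - 1) 0 with h | h
    · rw [max_eq_left h]; omega
    · rw [max_eq_right h]; omega
  rw [hc]; ring

lemma cut_eq {V : Type*} [Fintype V] [DecidableEq V] (A : Finset (V × V)) (w : V × V → ℕ)
    (bot top : V) (k : ℕ) (M : ℤ) (p : V → ℤ)
    (hbot : p bot = k) (htop : p top = 0) (hbd : ∀ v, 0 ≤ p v ∧ p v ≤ k)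
    (harc : ∀ a ∈ A, p a.1 ≤ p a.2)
    (X : Finset (VhatT V k))
    (hs : (Sum.inr true : VhatT V k) ∈ X)
    (ht : (Sum.inr false : VhatT V k) ∉ X)
    (hmem : ∀ (v : V) (i : Fin k), Sum.inl (v,i) ∈ X ↔ p v ≤ ((i:ℕ):ℤ)) :
    cutVal k (cap11 A w bot top k M) X = ∑ a ∈ A, (w a : ℤ) * max 0 (p a.2 - p a.1 - 1) := by
  unfold cutVal
  simp only [Fintype.sum_sum_type, Fintype.sum_prod_type, Fintype.sum_bool, cap11, hmem, hs, ht,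
    not_true, not_false_iff, true_and, false_and, and_true, and_false, if_false, if_true,
    ite_self, sum_const_zero, add_zero, zero_add, ite_true, ite_false, not_false_eq_true]
  have hbot0 : ∀ (x : V) (i : Fin k),
      (if p x ≤ ((i:ℕ):ℤ) then (if x = bot then M else 0) else 0) = 0 := by
    intro x i
    rcases eq_or_ne x bot with rfl | hx
    · have hni : ¬ p x ≤ ((i:ℕ):ℤ) := by rw [hbot]; have := i.isLt; omega
      rw [if_neg hni]
    · simp [hx]
  have htop0 : ∀ (x : V) (i : Fin k),
      (if ¬ p x ≤ ((i:ℕ):ℤ) then (if x = top then M else 0) else 0) = 0 := by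
    intro x i
    rcases eq_or_ne x top with rfl | hx
    · have hni : ¬¬ p x ≤ ((i:ℕ):ℤ) := not_not_intro (by rw [htop]; positivity)
      rw [if_neg hni]
    · simp [hx]
  simp only [hbot0, htop0, sum_const_zero, add_zero, zero_add]
  have main : ∀ (a : V) (i : Fin k) (b : V) (j : Fin k),
      (if p a ≤ ((i:ℕ):ℤ) ∧ ¬ p b ≤ ((j:ℕ):ℤ) then
        ((if a = b ∧ (j:ℕ) = (i:ℕ) + 1 then M else 0) +
         (if (b, a) ∈ A ∧ i = j then M else 0)) +
         (if (a, b) ∈ A ∧ 0 < w (a, b) ∧ (j:ℕ) = (i:ℕ) + 1 then (w (a, b) : ℤ) else 0)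
       else 0)
      = (if (((j:ℕ) = (i:ℕ) + 1 ∧ p a ≤ ((i:ℕ):ℤ)) ∧ (((j:ℕ):ℤ) < p b)) ∧
            ((a, b) ∈ A ∧ 0 < w (a, b)) then (w (a, b) : ℤ) else 0) := by
    intro a i b j
    by_cases hc : p a ≤ ((i:ℕ):ℤ) ∧ ¬ p b ≤ ((j:ℕ):ℤ)
    · rw [if_pos hc]
      have hjb : ((j:ℕ):ℤ) < p b := lt_of_not_ge hc.2
      have h1 : ¬(a = b ∧ (j:ℕ) = (i:ℕ) + 1) := by
        rintro ⟨rfl, hj⟩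
        have := hc.1; have := hjb; omega
      have h2 : ¬((b, a) ∈ A ∧ i = j) := by
        rintro ⟨hA, rfl⟩
        exact absurd (le_trans (harc _ hA) hc.1) hc.2
      rw [if_neg h1, if_neg h2, zero_add, zero_add]
      by_cases h3 : (a, b) ∈ A ∧ 0 < w (a, b) ∧ (j:ℕ) = (i:ℕ) + 1
      · rw [if_pos h3, if_pos ⟨⟨⟨h3.2.2, hc.1⟩, hjb⟩, h3.1, h3.2.1⟩]
      · rw [if_neg h3, if_neg (by rintro ⟨⟨⟨hj, _⟩, _⟩, hA, hw⟩; exact h3 ⟨hA, hw, hj⟩)]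
    · rw [if_neg hc, if_neg (by rintro ⟨⟨⟨_, hpa⟩, hj⟩, _⟩; exact hc ⟨hpa, not_le_of_gt hj⟩)]
  simp only [main]
  have hswap : ∀ a : V, (∑ i : Fin k, ∑ b : V, ∑ j : Fin k,
      (if (((j:ℕ) = (i:ℕ) + 1 ∧ p a ≤ ((i:ℕ):ℤ)) ∧ (((j:ℕ):ℤ) < p b)) ∧
          ((a, b) ∈ A ∧ 0 < w (a, b)) then (w (a, b) : ℤ) else 0))
      = ∑ b : V, ∑ i : Fin k, ∑ j : Fin k,
      (if (((j:ℕ) = (i:ℕ) + 1 ∧ p a ≤ ((i:ℕ):ℤ)) ∧ (((j:ℕ):ℤ) < p b)) ∧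
          ((a, b) ∈ A ∧ 0 < w (a, b)) then (w (a, b) : ℤ) else 0) := by
    intro a; exact Finset.sum_comm
  simp only [hswap]
  rw [show (∑ a ∈ A, (w a : ℤ) * max 0 (p a.2 - p a.1 - 1))
      = ∑ x : V × V, (if x ∈ A then (w x : ℤ) * max 0 (p x.2 - p x.1 - 1) else 0) by
    rw [Finset.sum_ite_mem, univ_inter], Fintype.sum_prod_type]
  refine Finset.sum_congr rfl fun a _ => Finset.sum_congr rfl fun b _ => ?_
  by_cases hA : (a, b) ∈ A
  · by_cases hw : 0 < w (a, b)
    · simp only [hA, hw, and_true, if_true]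
      exact inner_count k (w (a,b)) (p a) (p b) (hbd a).1 (hbd b).2
    · have hw0 : w (a, b) = 0 := by omega
      simp [hw, hw0]
  · simp only [hA, false_and, and_false, if_false, sum_const_zero]

lemma col_card {k : ℕ} (Q : Fin k → Prop) [DecidablePred Q]
    (hmono : ∀ i j : Fin k, (i:ℕ) ≤ (j:ℕ) → Q i → Q j) (i : Fin k) :
    Q i ↔ ((Finset.univ.filter (fun j => ¬ Q j)).card : ℤ) ≤ ((i:ℕ):ℤ) := by
  constructor
  · intro hi
    have hsub : ((Finset.univ.filter (fun j => ¬ Q j)).card) ≤ (i:ℕ) := by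
      refine le_trans (Finset.card_le_card_of_injOn (fun j : Fin k => (j:ℕ)) ?_ ?_)
        (le_of_eq (Finset.card_range (i:ℕ)))
      · intro j hj
        simp only [Finset.mem_coe, mem_filter, mem_univ, true_and] at hj
        show (j:ℕ) ∈ Finset.range (i:ℕ)
        rw [Finset.mem_range]
        by_contra hge
        exact hj (hmono i j (by omega) hi)
      · intro a _ b _ h; exact Fin.ext h
    exact_mod_cast hsub
  · intro hle
    by_contra hi
    have hk : 0 < k := i.pos
    have hall : ∀ j : Fin k, (j:ℕ) ≤ (i:ℕ) → ¬ Q j := fun j hj hQ => hi (hmono j i hj hQ)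
    have hcard : (i:ℕ) + 1 ≤ ((Finset.univ.filter (fun j => ¬ Q j)).card) := by
      refine le_trans (le_of_eq (Finset.card_range ((i:ℕ)+1)).symm)
        (Finset.card_le_card_of_injOn (fun n : ℕ => (⟨n % k, Nat.mod_lt n hk⟩ : Fin k)) ?_ ?_)
      · intro n hn
        rw [Finset.mem_coe, Finset.mem_range] at hn
        have hnk : n < k := lt_of_le_of_lt (Nat.lt_succ_iff.mp hn) i.isLt
        show (⟨n % k, Nat.mod_lt n hk⟩ : Fin k) ∈ Finset.univ.filter (fun j => ¬ Q j)
        simp only [mem_filter, mem_univ, true_and]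
        exact hall _ (by simp [Nat.mod_eq_of_lt hnk]; omega)
      · intro a ha b hb h
        simp only [Finset.coe_range, Set.mem_Iio] at ha hb
        have ha' : a < k := lt_of_le_of_lt (Nat.lt_succ_iff.mp ha) i.isLt
        have hb' : b < k := lt_of_le_of_lt (Nat.lt_succ_iff.mp hb) i.isLt
        have hval : a % k = b % k := congrArg Fin.val h
        rwa [Nat.mod_eq_of_lt ha', Nat.mod_eq_of_lt hb'] at hval
    omega

/-- With `φ(x) = max{0, x−1}` and `Â₃ = {(uⁱ,v^{i+1}) : (u,v) ∈ A, w > 0}`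
of capacity `w((u,v))`: every `X ⊆ V̂` with `s ∈ X`, `t ∉ X` and `δ(X) < M` yields a
`k`-potential `p` with `H(p) = δ(X)`, and conversely every `k`-potential `p` yields such
an `X` with `δ(X) = H(p)`. -/
theorem stmt_11 {V : Type*} [Fintype V] [DecidableEq V]
    (A : Finset (V × V)) (w : V × V → ℕ) (top bot : V) (htb : top ≠ bot)
    (hacyc : ∀ v : V, ¬ Relation.TransGen (fun x y => (x, y) ∈ A) v v)
    (hsrc : ∀ u : V, (u, top) ∉ A)
    (hsrcu : ∀ v : V, (∀ u : V, (u, v) ∉ A) → v = top)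
    (hsink : ∀ u : V, (bot, u) ∉ A)
    (hsinku : ∀ v : V, (∀ u : V, (v, u) ∉ A) → v = bot)
    (k : ℕ) (hk : 0 < k) (M : ℤ) (hMpos : 0 < M)
    (φ : ℤ → ℤ) (hφ : φ = fun x => max 0 (x - 1))
    (hM : ∀ p : V → ℤ, IsKPotentialG A bot top k p →
      (∑ a ∈ A, (w a : ℤ) * φ (p a.2 - p a.1)) < M) :
    (∀ X : Finset (VhatT V k),
      (Sum.inr true : VhatT V k) ∈ X → (Sum.inr false : VhatT V k) ∉ X →
      cutVal k (cap11 A w bot top k M) X < M →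
      ∃ p : V → ℤ, IsKPotentialG A bot top k p ∧
        (∑ a ∈ A, (w a : ℤ) * φ (p a.2 - p a.1)) = cutVal k (cap11 A w bot top k M) X) ∧
    (∀ p : V → ℤ, IsKPotentialG A bot top k p →
      ∃ X : Finset (VhatT V k),
        (Sum.inr true : VhatT V k) ∈ X ∧ (Sum.inr false : VhatT V k) ∉ X ∧
        cutVal k (cap11 A w bot top k M) X = ∑ a ∈ A, (w a : ℤ) * φ (p a.2 - p a.1)) := by
  have hφ' : ∀ (p : V → ℤ), (∑ a ∈ A, (w a : ℤ) * φ (p a.2 - p a.1))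
      = ∑ a ∈ A, (w a : ℤ) * max 0 (p a.2 - p a.1 - 1) := by
    intro p; refine Finset.sum_congr rfl fun a _ => ?_; rw [hφ]
  constructor
  · -- Direction 1: cut → potential
    intro X hs ht hcut
    have hnn : ∀ x y, 0 ≤ cap11 A w bot top k M x y := by
      rintro (⟨a,i⟩|(_|_)) (⟨b,j⟩|(_|_)) <;> simp only [cap11] <;> (try split_ifs) <;> omega
    have hterm : ∀ x y, x ∈ X → y ∉ X →
        cap11 A w bot top k M x y ≤ cutVal k (cap11 A w bot top k M) X := by
      intro x y hx hy
      have e : cap11 A w bot top k M x y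
          = (if x ∈ X ∧ y ∉ X then cap11 A w bot top k M x y else 0) := by simp [hx, hy]
      rw [e]
      calc (if x ∈ X ∧ y ∉ X then cap11 A w bot top k M x y else 0)
          ≤ ∑ y' : VhatT V k, (if x ∈ X ∧ y' ∉ X then cap11 A w bot top k M x y' else 0) :=
            Finset.single_le_sum
              (f := fun y' => if x ∈ X ∧ y' ∉ X then cap11 A w bot top k M x y' else 0)
              (fun z _ => by
                show (0:ℤ) ≤ if x ∈ X ∧ z ∉ X then cap11 A w bot top k M x z else 0
                split_ifs with h; exacts [hnn x z, le_refl 0]) (mem_univ y)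
        _ ≤ ∑ x' : VhatT V k, ∑ y' : VhatT V k,
              (if x' ∈ X ∧ y' ∉ X then cap11 A w bot top k M x' y' else 0) :=
            Finset.single_le_sum
              (f := fun x' => ∑ y' : VhatT V k,
                (if x' ∈ X ∧ y' ∉ X then cap11 A w bot top k M x' y' else 0))
              (fun z _ => by
                show (0:ℤ) ≤ ∑ y' : VhatT V k,
                  (if z ∈ X ∧ y' ∉ X then cap11 A w bot top k M z y' else 0)
                exact Finset.sum_nonneg fun z' _ => by
                  split_ifs with h; exacts [hnn z z', le_refl 0]) (mem_univ x)
        _ = cutVal k (cap11 A w bot top k M) X := rfl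
    have htopX : ∀ i : Fin k, (Sum.inl (top, i) : VhatT V k) ∈ X := by
      intro i; by_contra h
      have h1 := hterm _ _ hs h
      have h2 : cap11 A w bot top k M (Sum.inr true) (Sum.inl (top, i)) = M := by
        simp [cap11]
      rw [h2] at h1; linarith
    have hbotX : ∀ i : Fin k, (Sum.inl (bot, i) : VhatT V k) ∉ X := by
      intro i h
      have h1 := hterm _ _ h ht
      have h2 : cap11 A w bot top k M (Sum.inl (bot, i)) (Sum.inr false) = M := by
        simp [cap11]
      rw [h2] at h1; linarith
    have hUp1 : ∀ (v : V) (i j : Fin k), (j:ℕ) = (i:ℕ) + 1 →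
        (Sum.inl (v, i) : VhatT V k) ∈ X → (Sum.inl (v, j) : VhatT V k) ∈ X := by
      intro v i j hij hi; by_contra hj
      have h1 := hterm _ _ hi hj
      have h2 : M ≤ cap11 A w bot top k M (Sum.inl (v, i)) (Sum.inl (v, j)) := by
        have e : cap11 A w bot top k M (Sum.inl (v, i)) (Sum.inl (v, j))
            = (if v = v ∧ (j:ℕ) = (i:ℕ) + 1 then M else 0) +
              (if (v, v) ∈ A ∧ i = j then M else 0) +
              (if (v, v) ∈ A ∧ 0 < w (v, v) ∧ (j:ℕ) = (i:ℕ) + 1 then (w (v, v) : ℤ) else 0) := rfl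
        rw [e, if_pos (⟨rfl, hij⟩ : v = v ∧ (j:ℕ) = (i:ℕ) + 1)]
        have a1 : (0:ℤ) ≤ if (v, v) ∈ A ∧ i = j then M else 0 := by split_ifs <;> linarith
        have a2 : (0:ℤ) ≤ if (v, v) ∈ A ∧ 0 < w (v, v) ∧ (j:ℕ) = (i:ℕ) + 1
            then (w (v, v) : ℤ) else 0 := by split_ifs <;> positivity
        linarith
      linarith
    have hArcX : ∀ u v : V, (u, v) ∈ A → ∀ i : Fin k,
        (Sum.inl (v, i) : VhatT V k) ∈ X → (Sum.inl (u, i) : VhatT V k) ∈ X := by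
      intro u v hA i hv; by_contra hu
      have h1 := hterm _ _ hv hu
      have h2 : M ≤ cap11 A w bot top k M (Sum.inl (v, i)) (Sum.inl (u, i)) := by
        have e : cap11 A w bot top k M (Sum.inl (v, i)) (Sum.inl (u, i))
            = (if v = u ∧ (i:ℕ) = (i:ℕ) + 1 then M else 0) +
              (if (u, v) ∈ A ∧ i = i then M else 0) +
              (if (v, u) ∈ A ∧ 0 < w (v, u) ∧ (i:ℕ) = (i:ℕ) + 1 then (w (v, u) : ℤ) else 0) := rfl
        rw [e, if_pos (⟨hA, rfl⟩ : (u, v) ∈ A ∧ i = i)]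
        have a1 : (0:ℤ) ≤ if v = u ∧ (i:ℕ) = (i:ℕ) + 1 then M else 0 := by
          split_ifs <;> linarith
        have a3 : (0:ℤ) ≤ if (v, u) ∈ A ∧ 0 < w (v, u) ∧ (i:ℕ) = (i:ℕ) + 1
            then (w (v, u) : ℤ) else 0 := by split_ifs <;> positivity
        linarith
      linarith
    have hUp' : ∀ (v : V) (n : ℕ) (i j : Fin k), (j:ℕ) = (i:ℕ) + n →
        (Sum.inl (v, i) : VhatT V k) ∈ X → (Sum.inl (v, j) : VhatT V k) ∈ X := by
      intro v n
      induction n with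
      | zero =>
        intro i j hij hi
        have : j = i := Fin.ext (by omega)
        rwa [this]
      | succ n ih =>
        intro i j hij hi
        have hn : (i:ℕ) + n < k := by have := j.isLt; omega
        exact hUp1 v ⟨(i:ℕ) + n, hn⟩ j (hij.trans (Nat.add_assoc _ _ _).symm) (ih i ⟨(i:ℕ) + n, hn⟩ rfl hi)
    set p : V → ℤ :=
      fun v => ((Finset.univ.filter (fun j : Fin k => ¬ (Sum.inl (v, j) : VhatT V k) ∈ X)).card : ℤ)
      with hpdef
    have hmem : ∀ (v : V) (i : Fin k), (Sum.inl (v, i) : VhatT V k) ∈ X ↔ p v ≤ ((i:ℕ):ℤ) := by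
      intro v i
      exact col_card (fun j : Fin k => (Sum.inl (v, j) : VhatT V k) ∈ X)
        (fun i j hij hQ => hUp' v ((j:ℕ) - (i:ℕ)) i j (by omega) hQ) i
    have hpbot : p bot = (k:ℤ) := by
      rw [hpdef]
      simp only
      rw [Finset.filter_true_of_mem (fun j _ => hbotX j), Finset.card_univ, Fintype.card_fin]
    have hptop : p top = 0 := by
      rw [hpdef]
      simp only
      rw [Finset.filter_false_of_mem (fun j _ => not_not_intro (htopX j)), Finset.card_empty]
      simp
    have hpbd : ∀ v, 0 ≤ p v ∧ p v ≤ (k:ℤ) := by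
      intro v
      constructor
      · rw [hpdef]; exact Nat.cast_nonneg _
      · rw [hpdef]
        simp only
        have := Finset.card_filter_le (Finset.univ : Finset (Fin k))
          (fun j : Fin k => ¬ (Sum.inl (v, j) : VhatT V k) ∈ X)
        rw [Finset.card_univ, Fintype.card_fin] at this
        exact_mod_cast this
    have hparc : ∀ a ∈ A, p a.1 ≤ p a.2 := by
      rintro ⟨u, v⟩ hA
      rw [hpdef]
      simp only
      have hsub : (Finset.univ.filter (fun j : Fin k => ¬ (Sum.inl (u, j) : VhatT V k) ∈ X))
          ⊆ (Finset.univ.filter (fun j : Fin k => ¬ (Sum.inl (v, j) : VhatT V k) ∈ X)) := by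
        intro j hj
        simp only [mem_filter, mem_univ, true_and] at hj ⊢
        exact fun hv => hj (hArcX u v hA j hv)
      exact_mod_cast Finset.card_le_card hsub
    refine ⟨p, ⟨hpbot, hptop, hpbd, hparc⟩, ?_⟩
    rw [hφ' p, cut_eq A w bot top k M p hpbot hptop hpbd hparc X hs ht hmem]
  · -- Direction 2: potential → cut
    intro p hp
    obtain ⟨hpbot, hptop, hpbd, hparc⟩ := hp
    set X : Finset (VhatT V k) :=
      ((Finset.univ.filter (fun vi : V × Fin k => p vi.1 ≤ ((vi.2:ℕ):ℤ))).image Sum.inl)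
        ∪ {Sum.inr true} with hXdef
    have hs : (Sum.inr true : VhatT V k) ∈ X := by
      rw [hXdef]; exact Finset.mem_union_right _ (Finset.mem_singleton_self _)
    have ht : (Sum.inr false : VhatT V k) ∉ X := by
      rw [hXdef]
      simp
    have hmem : ∀ (v : V) (i : Fin k), (Sum.inl (v, i) : VhatT V k) ∈ X ↔ p v ≤ ((i:ℕ):ℤ) := by
      intro v i
      rw [hXdef]
      simp [Finset.mem_union, Finset.mem_image]
    exact ⟨X, hs, ht, by
      rw [hφ' p, cut_eq A w bot top k M p hpbot hptop hpbd hparc X hs ht hmem]⟩
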